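/- A function f : Z → ℂ is admissible (i.e., for all finite sequences of complex numbers c_k and points z_k ∈ Z, if ∑ c_k K(z_k, z) = 0 for all z ∈ Z then ∑ c_k f(z_k) = 0) if and only if there exists an antilinear functional ψ on the quantum space Q(Z) such that f(z) = ⟨z|ψ for all z ∈ Z; moreover such ψ is unique. -/

import Mathlib

open scoped ComplexConjugate

/-- A function `f : Z → ℂ` is admissible for the coherent product `K` if whenever
`∑ c_k K(z_k, ·) ≡ 0` for a finite family, also `∑ c_k f(z_k) = 0`. -/
def Admissible {Z : Type*} (K : Z → Z → ℂ) (f : Z → ℂ) : Prop :=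
  ∀ (n : ℕ) (c : Fin n → ℂ) (zs : Fin n → Z),
    (∀ z, ∑ i, c i * K (zs i) z = 0) → ∑ i, c i * f (zs i) = 0

/-- Finsupp version of admissibility. -/
lemma Admissible.finsupp {Z : Type*} {K : Z → Z → ℂ} {f : Z → ℂ}
    (h : Admissible K f) (l : Z →₀ ℂ)
    (hl : ∀ z, ∑ a ∈ l.support, conj (l a) * K a z = 0) :
    ∑ a ∈ l.support, conj (l a) * f a = 0 := by
  classical
  let e := l.support.equivFin
  have key : ∀ g : Z → ℂ, ∑ i : Fin l.support.card, conj (l (e.symm i).1) * g (e.symm i).1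
      = ∑ a ∈ l.support, conj (l a) * g a := by
    intro g
    rw [← Finset.sum_coe_sort l.support (fun a => conj (l a) * g a)]
    exact Fintype.sum_equiv e.symm _ _ (fun i => rfl)
  have := h l.support.card (fun i => conj (l (e.symm i).1)) (fun i => (e.symm i).1)
    (fun z => by rw [key (fun a => K a z)]; exact hl z)
  rwa [key f] at this

theorem admissible_iff_exists_unique_antilinear_functional
    {Z : Type*} (K : Z → Z → ℂ)
    {Q : Type*} [NormedAddCommGroup Q] [InnerProductSpace ℂ Q]
    (k : Z → Q) (hK : ∀ z z', (inner ℂ (k z) (k z') : ℂ) = K z z')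
    (hspan : Submodule.span ℂ (Set.range k) = ⊤) (f : Z → ℂ) :
    Admissible K f ↔ ∃! ψ : Q →ₛₗ[starRingEnd ℂ] ℂ, ∀ z, ψ (k z) = f z := by
  constructor
  · intro hadm
    classical
    set T : (Z →₀ ℂ) →ₗ[ℂ] Q := Finsupp.linearCombination ℂ k with hT_def
    have hT : Function.Surjective T := by
      rw [← LinearMap.range_eq_top, hT_def, Finsupp.range_linearCombination, hspan]
    set L : (Z →₀ ℂ) →ₗ[ℂ] ℂ := Finsupp.linearCombination ℂ (fun z => conj (f z)) with hL_def
    have hker : LinearMap.ker T ≤ LinearMap.ker L := by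
      intro l hl
      rw [LinearMap.mem_ker] at hl ⊢
      have hTl : ∑ a ∈ l.support, l a • k a = 0 := by
        rwa [hT_def, Finsupp.linearCombination_apply, Finsupp.sum] at hl
      have h0 : ∀ z, ∑ a ∈ l.support, conj (l a) * K a z = 0 := by
        intro z
        have : (inner ℂ (∑ a ∈ l.support, l a • k a) (k z) : ℂ) = 0 := by
          rw [hTl, inner_zero_left]
        rwa [sum_inner, Finset.sum_congr rfl
          (fun a _ => by rw [inner_smul_left, hK])] at this
      have hf0 := hadm.finsupp l h0
      rw [hL_def, Finsupp.linearCombination_apply, Finsupp.sum]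
      have : ∑ a ∈ l.support, l a • conj (f a)
          = conj (∑ a ∈ l.support, conj (l a) * f a) := by
        rw [map_sum]
        exact Finset.sum_congr rfl (fun a _ => by
          simp [smul_eq_mul, mul_comm])
      rw [this, hf0, map_zero]
    let eqv := LinearMap.quotKerEquivOfSurjective T hT
    let φ : Q →ₗ[ℂ] ℂ := ((LinearMap.ker T).liftQ L hker).comp eqv.symm.toLinearMap
    have hφT : ∀ x, φ (T x) = L x := by
      intro x
      have h1 : eqv ((LinearMap.ker T).mkQ x) = T x := by
        simp [eqv, LinearMap.quotKerEquivOfSurjective]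
      have h2 : eqv.symm (T x) = (LinearMap.ker T).mkQ x := by
        apply eqv.injective
        rw [LinearEquiv.apply_symm_apply, h1]
      show ((LinearMap.ker T).liftQ L hker) (eqv.symm (T x)) = L x
      rw [h2]
      exact Submodule.liftQ_apply _ L x
    have hφk : ∀ z, φ (k z) = conj (f z) := by
      intro z
      have : T (Finsupp.single z 1) = k z := by
        simp [hT_def]
      rw [← this, hφT, hL_def]
      simp
    refine ⟨{ toFun := fun x => conj (φ x),
              map_add' := fun x y => by simp,
              map_smul' := fun c x => by simp }, fun z => by simp [hφk z], ?_⟩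
    · intro ψ' hψ'
      refine LinearMap.ext_on hspan ?_
      rintro x ⟨z, rfl⟩
      simp [hψ' z, hφk z]
  · rintro ⟨ψ, hψ, -⟩
    intro n c zs h0
    set v : Q := ∑ i, (conj (c i)) • k (zs i) with hv_def
    have hvz : ∀ u ∈ Submodule.span ℂ (Set.range k), (inner ℂ v u : ℂ) = 0 := by
      intro u hu
      induction hu using Submodule.span_induction with
      | mem u hu =>
        obtain ⟨z, rfl⟩ := hu
        rw [hv_def, sum_inner]
        simp only [inner_smul_left, hK, Complex.conj_conj]
        exact h0 z
      | zero => simp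
      | add u w _ _ hu hw => rw [inner_add_right, hu, hw, add_zero]
      | smul a u _ hu => rw [inner_smul_right, hu, mul_zero]
    have hv : v = 0 := by
      rw [← inner_self_eq_zero (𝕜 := ℂ)]
      exact hvz v (hspan ▸ Submodule.mem_top)
    have := congrArg ψ hv
    rw [map_zero, hv_def, map_sum] at this
    rw [← this]
    exact Finset.sum_congr rfl (fun i _ => by
      rw [LinearMap.map_smulₛₗ, hψ]; simp)
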